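/- Let D = H × G be a direct product of finite groups, p a prime, M a normal p-subgroup of D, and u ∈ V(ℤD) a torsion unit of order p^m·k with gcd(p,k)=1. Denote by ū the image of u in ℤ(D/M) and assume o(ū) < o(u) and that the generalized trace ε_{D/M[w]}(ū) is nonzero only for w = o(ū). Assume further that ε_g(u) = 0 whenever the p-part of g has order less than p^m (Hertweck), that ε_g(u) = 0 unless o(g) divides o(u), and that any torsion unit of ℤD mapping to 1 in ℤ(D/M) is a p-element. Then ε_{D[j]}(u) = 0 for all j ≠ o(u). -/

import Mathlib

open scoped Classical

def IsPPart {D : Type*} [Group D] (p : ℕ) (g h : D) : Prop :=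
  h ∈ Subgroup.zpowers g ∧ (∃ n : ℕ, orderOf h = p ^ n) ∧
    ∃ h' ∈ Subgroup.zpowers g, g = h * h' ∧ ¬ p ∣ orderOf h'


section Aux
variable {D : Type*} [Group D] [Fintype D]

lemma conj_closed_sum_aux {instC : ∀ g x : D, Decidable (IsConj g x)} (u : D → ℤ) :
    ∀ n (s : Finset D), s.card ≤ n →
      (∀ g ∈ s, (∑ x : D, if IsConj g x then u x else 0) = 0) →
      (∀ g ∈ s, ∀ x : D, IsConj g x → x ∈ s) → (∑ g ∈ s, u g) = 0 := by
  intro n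
  induction n with
  | zero =>
    intro s hs _ _
    rw [Nat.le_zero, Finset.card_eq_zero] at hs
    simp [hs]
  | succ n ih =>
    intro s hcard hcl hclosed
    rcases s.eq_empty_or_nonempty with rfl | ⟨g₀, hg₀⟩
    · simp
    · set C : Finset D := Finset.univ.filter (fun x => IsConj g₀ x) with hC
      have hCsub : C ⊆ s := by
        intro x hx
        rw [hC, Finset.mem_filter] at hx
        exact hclosed g₀ hg₀ x hx.2
      have hCsum : ∑ g ∈ C, u g = 0 := by
        rw [hC, Finset.sum_filter]
        exact hcl g₀ hg₀
      have hg₀C : g₀ ∈ C := by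
        rw [hC, Finset.mem_filter]
        exact ⟨Finset.mem_univ _, IsConj.refl g₀⟩
      have hss : s \ C ⊂ s := by
        refine Finset.ssubset_iff_of_subset (Finset.sdiff_subset) |>.mpr ?_
        exact ⟨g₀, hg₀, by simp [hg₀C]⟩
      have hlt : (s \ C).card ≤ n := by
        have := Finset.card_lt_card hss
        omega
      have hrest : ∑ g ∈ s \ C, u g = 0 := by
        refine ih (s \ C) hlt (fun g hg => hcl g (Finset.mem_sdiff.mp hg).1) ?_
        intro g hg x hx
        rw [Finset.mem_sdiff] at hg ⊢
        refine ⟨hclosed g hg.1 x hx, fun hxC => hg.2 ?_⟩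
        rw [hC, Finset.mem_filter] at hxC ⊢
        exact ⟨Finset.mem_univ _, hxC.2.trans hx.symm⟩
      rw [← Finset.sum_sdiff hCsub, hrest, hCsum, add_zero]

lemma classSum (u : D → ℤ) (P : D → Prop) [DecidablePred P]
    {instC : ∀ g x : D, Decidable (IsConj g x)}
    (hconj : ∀ g x : D, IsConj g x → P g → P x)
    (h : ∀ g : D, P g → (∑ x : D, @ite ℤ (IsConj g x) (instC g x) (u x) 0) = 0) :
    (∑ g : D, if P g then u g else 0) = 0 := by
  rw [← Finset.sum_filter]
  refine conj_closed_sum_aux (instC := instC) u (Finset.univ.filter P).card _ le_rfl ?_ ?_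
  · intro g hg
    exact h g (Finset.mem_filter.mp hg).2
  · intro g hg x hx
    rw [Finset.mem_filter] at hg ⊢
    exact ⟨Finset.mem_univ _, hconj g x hx hg.2⟩


end Aux

section Aux
variable {D : Type*} [Group D] [Fintype D]

lemma ppart_orderOf {p : ℕ} (hp : p.Prime) {g h : D} (hh : IsPPart p g h) :
    orderOf h = p ^ ((orderOf g).factorization p) := by
  obtain ⟨hmem, ⟨nh, hnh⟩, h', hmem', hgh, hcop⟩ := hh
  have hdvd : orderOf h ∣ orderOf g := orderOf_dvd_of_mem_zpowers hmem
  obtain ⟨a, ha⟩ := hmem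
  obtain ⟨b, hb⟩ := hmem'
  have hcomm : Commute h h' := by
    rw [← ha, ← hb]
    exact (Commute.refl g).zpow_zpow a b
  have hdvd2 : orderOf g ∣ orderOf h * orderOf h' := by
    apply orderOf_dvd_of_pow_eq_one
    rw [hgh, hcomm.mul_pow, pow_mul, pow_orderOf_eq_one, one_pow, one_mul,
      mul_comm (orderOf h) (orderOf h'), pow_mul, pow_orderOf_eq_one, one_pow]
  have hgpos : 0 < orderOf g := orderOf_pos g
  have h1 : nh ≤ (orderOf g).factorization p := by
    rw [← Nat.Prime.pow_dvd_iff_le_factorization hp hgpos.ne', ← hnh]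
    exact hdvd
  have h2 : (orderOf g).factorization p ≤ nh := by
    have hpd : p ^ ((orderOf g).factorization p) ∣ orderOf g := Nat.ordProj_dvd _ _
    have : p ^ ((orderOf g).factorization p) ∣ orderOf h * orderOf h' :=
      hpd.trans hdvd2
    have hcop' : (p ^ ((orderOf g).factorization p)).Coprime (orderOf h') :=
      Nat.Coprime.pow_left _ ((Nat.Prime.coprime_iff_not_dvd hp).mpr hcop)
    have := (Nat.Coprime.dvd_of_dvd_mul_right hcop' this)
    rw [hnh] at this
    exact (Nat.pow_dvd_pow_iff_le_right hp.one_lt).mp this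
  rw [hnh, le_antisymm h1 h2]

lemma ordCompl_quot {p : ℕ} (hp : p.Prime) (M : Subgroup D) [M.Normal]
    (hM : IsPGroup p M) (g : D) :
    ordCompl[p] (orderOf (QuotientGroup.mk (s := M) g)) = ordCompl[p] (orderOf g) := by
  set n := orderOf g with hn
  set n' := orderOf (QuotientGroup.mk (s := M) g) with hn'
  have hdvd : n' ∣ n := orderOf_map_dvd (QuotientGroup.mk' M) g
  have hmem : g ^ n' ∈ M := by
    rw [← QuotientGroup.eq_one_iff]
    rw [QuotientGroup.mk_pow]
    exact pow_orderOf_eq_one _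
  obtain ⟨t, ht⟩ := hM ⟨g ^ n', hmem⟩
  have ht' : (g ^ n') ^ p ^ t = 1 := by
    have := congrArg (Subgroup.subtype M) ht
    simpa using this
  have hdvd2 : n ∣ n' * p ^ t := by
    apply orderOf_dvd_of_pow_eq_one
    rw [pow_mul]
    exact ht'
  have hnpos : 0 < n := orderOf_pos g
  have hn'pos : 0 < n' := by
    have : Finite (D ⧸ M) := Quotient.finite _
    exact orderOf_pos _
  refine Nat.dvd_antisymm (Nat.ordCompl_dvd_ordCompl_of_dvd hdvd p) ?_
  have h1 : ordCompl[p] n ∣ ordCompl[p] (n' * p ^ t) :=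
    Nat.ordCompl_dvd_ordCompl_of_dvd hdvd2 p
  have hone : ordCompl[p] (p ^ t) = 1 := by
    simp [hp.factorization_pow, Nat.Prime.factorization_self hp, Nat.div_self, pow_pos hp.pos]
  rwa [Nat.ordCompl_mul, hone, mul_one] at h1

end Aux


-- L3: pushing a sum through mapDomain
lemma sum_ite_mapDomain {D Q' : Type*} [Fintype D] [Fintype Q'] (f : D → Q')
    (u : D →₀ ℤ) (P : Q' → Prop) [DecidablePred P] :
    (∑ y : Q', if P y then (Finsupp.mapDomain f u) y else 0)
      = ∑ g : D, if P (f g) then u g else 0 := by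
  have happ : ∀ y : Q', (Finsupp.mapDomain f u) y
      = ∑ g : D, if f g = y then u g else 0 := by
    intro y
    rw [Finsupp.mapDomain, Finsupp.sum_apply]
    rw [Finsupp.sum]
    have : ∀ g : D, (Finsupp.single (f g) (u g)) y = if f g = y then u g else 0 := by
      intro g; rw [Finsupp.single_apply]
    rw [Finset.sum_congr rfl fun g _ => this g]
    refine Finset.sum_subset (Finset.subset_univ _) ?_
    intro g _ hg
    rw [Finsupp.notMem_support_iff] at hg
    simp [hg]
  calc (∑ y : Q', if P y then (Finsupp.mapDomain f u) y else 0)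
      = ∑ y : Q', ∑ g : D, if f g = y then (if P y then u g else 0) else 0 := by
        refine Finset.sum_congr rfl fun y _ => ?_
        by_cases hy : P y
        · simp only [hy, if_true, happ y]
        · simp [hy]
    _ = ∑ g : D, ∑ y : Q', if f g = y then (if P y then u g else 0) else 0 :=
        Finset.sum_comm
    _ = ∑ g : D, if P (f g) then u g else 0 := by
        refine Finset.sum_congr rfl fun g _ => ?_
        rw [Finset.sum_ite_eq Finset.univ (f g) (fun y => if P y then u g else 0)]
        simp

-- L4: grouping a sum by orderOf
lemma sum_group_by_order {D : Type*} [Monoid D] [Fintype D] (v : D → ℤ) (Q : ℕ → Prop)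
    [DecidablePred Q] :
    (∑ y : D, if Q (orderOf y) then v y else 0)
      = ∑ w ∈ Finset.univ.image (orderOf : D → ℕ),
          (if Q w then (∑ y : D, if orderOf y = w then v y else 0) else 0) := by
  rw [← Finset.sum_fiberwise_of_maps_to (g := orderOf) (fun x _ => Finset.mem_image_of_mem _ (Finset.mem_univ x))
    (fun y => if Q (orderOf y) then v y else 0)]
  refine Finset.sum_congr rfl fun w _ => ?_
  by_cases hw : Q w
  · simp only [hw, if_true]
    conv_rhs => rw [← Finset.sum_filter]
    refine Finset.sum_congr rfl fun y hy => ?_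
    rw [Finset.mem_filter] at hy
    simp [hy.2, hw]
  · simp only [hw, if_false]
    refine Finset.sum_eq_zero fun y hy => ?_
    rw [Finset.mem_filter] at hy
    simp [hy.2, hw]

theorem generalized_trace_vanishing {H K : Type*} [Group H] [Group K]
    [Fintype H] [Fintype K]
    (p : ℕ) (hp : p.Prime)
    (M : Subgroup (H × K)) [M.Normal] (hM : IsPGroup p M)
    (u : MonoidAlgebra ℤ (H × K)) (hu : IsUnit u)
    (haug : ∑ g : H × K, u.coeff g = 1)
    (m k : ℕ) (hk : ¬ p ∣ k) (hord : orderOf u = p ^ m * k)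
    (ubar : MonoidAlgebra ℤ ((H × K) ⧸ M))
    (hubar : ubar = MonoidAlgebra.mapDomainRingHom ℤ (QuotientGroup.mk' M) u)
    (hlt : orderOf ubar < orderOf u)
    (htrbar : ∀ w : ℕ,
      (∑ y : (H × K) ⧸ M, if orderOf y = w then ubar.coeff y else 0) ≠ 0 →
      w = orderOf ubar)
    (hHertweck : ∀ g : H × K,
      (∀ h : H × K, IsPPart p g h → orderOf h < p ^ m) →
      (∑ x : H × K, if IsConj g x then u.coeff x else 0) = 0)
    (hOrd : ∀ g : H × K, ¬ orderOf g ∣ orderOf u →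
      (∑ x : H × K, if IsConj g x then u.coeff x else 0) = 0)
    (hker : ∀ v : MonoidAlgebra ℤ (H × K), IsUnit v →
      (∃ n : ℕ, 0 < n ∧ v ^ n = 1) →
      MonoidAlgebra.mapDomainRingHom ℤ (QuotientGroup.mk' M) v = 1 →
      ∃ a : ℕ, orderOf v = p ^ a) :
    ∀ j : ℕ, j ≠ orderOf u →
      (∑ g : H × K, if orderOf g = j then u.coeff g else 0) = 0 := by
  intro j hj
  have hk0 : k ≠ 0 := fun h => hk (h ▸ dvd_zero p)
  have hnpos : 0 < orderOf u := by
    rw [hord]; exact Nat.mul_pos (pow_pos hp.pos m) (Nat.pos_of_ne_zero hk0)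
  have hpk : (p ^ m).Coprime k := Nat.Coprime.pow_left _ ((Nat.Prime.coprime_iff_not_dvd hp).mpr hk)
  have hordn : ordCompl[p] (orderOf u) = k := by
    have h1 : ordCompl[p] (p ^ m) = 1 := by
      simp [hp.factorization_pow, Nat.Prime.factorization_self hp, Nat.div_self, pow_pos hp.pos]
    have h2 : ordCompl[p] k = k := by
      rw [Nat.factorization_eq_zero_of_not_dvd hk, pow_zero, Nat.div_one]
    rw [hord, Nat.ordCompl_mul, h1, h2, one_mul]
  -- helper: vanishing by conjugacy classes
  have easy : ∀ j' : ℕ,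
      (∀ g : H × K, orderOf g = j' → (∑ x : H × K, if IsConj g x then u.coeff x else 0) = 0) →
      (∑ g : H × K, if orderOf g = j' then u.coeff g else 0) = 0 := by
    intro j' h
    refine classSum (fun g => u.coeff g) (fun g => orderOf g = j') ?_ h
    intro g x hgx hg
    obtain ⟨c, hc⟩ := hgx
    rw [← hc.orderOf_eq (↑c)]; exact hg
  have vanish_notdvd : ∀ j' : ℕ, ¬ j' ∣ orderOf u →
      (∑ g : H × K, if orderOf g = j' then u.coeff g else 0) = 0 := by
    intro j' hj'
    refine easy j' fun g hg => hOrd g ?_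
    rw [hg]; exact hj'
  have vanish_small : ∀ j' : ℕ, j'.factorization p < m →
      (∑ g : H × K, if orderOf g = j' then u.coeff g else 0) = 0 := by
    intro j' hv
    refine easy j' fun g hg => hHertweck g fun h hh => ?_
    rw [ppart_orderOf hp hh, hg]
    exact Nat.pow_lt_pow_right hp.one_lt hv
  by_cases hjd : j ∣ orderOf u
  swap
  · exact vanish_notdvd j hjd
  have hjpos : 0 < j := Nat.pos_of_dvd_of_pos hjd hnpos
  have hble : j.factorization p ≤ m := by
    have h1 : p ^ j.factorization p ∣ orderOf u := (Nat.ordProj_dvd j p).trans hjd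
    rw [hord] at h1
    have h2 : p ^ j.factorization p ∣ p ^ m := Nat.Coprime.dvd_of_dvd_mul_right
      (Nat.Coprime.pow_left _ ((Nat.Prime.coprime_iff_not_dvd hp).mpr hk)) h1
    exact (Nat.pow_dvd_pow_iff_le_right hp.one_lt).mp h2
  rcases lt_or_eq_of_le hble with hblt | hbeq
  · exact vanish_small j hblt
  -- the hard case: j = p^m * k'
  set k' := ordCompl[p] j with hk'def
  have hjfact : p ^ m * k' = j := by
    rw [← hbeq]; exact Nat.ordProj_mul_ordCompl_eq_self j p
  have hk'ne : k' ≠ k := by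
    intro h
    exact hj (by rw [← hjfact, h, ← hord])
  -- facts about ubar
  have hubar_n : ubar ^ orderOf u = 1 := by
    rw [hubar, ← map_pow, pow_orderOf_eq_one, map_one]
  have htpos : 0 < orderOf ubar :=
    (isOfFinOrder_iff_pow_eq_one.mpr ⟨orderOf u, hnpos, hubar_n⟩).orderOf_pos
  have htdvd : orderOf ubar ∣ orderOf u := orderOf_dvd_of_pow_eq_one hubar_n
  obtain ⟨a, ha⟩ := hker (u ^ orderOf ubar) (hu.pow _)
    ⟨orderOf u, hnpos, by rw [← pow_mul, mul_comm, pow_mul, pow_orderOf_eq_one, one_pow]⟩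
    (by rw [map_pow, ← hubar]; exact pow_orderOf_eq_one ubar)
  have hmul : orderOf u = orderOf ubar * p ^ a := by
    rw [← ha, orderOf_pow' u htpos.ne', Nat.gcd_eq_right htdvd,
      Nat.mul_div_cancel' htdvd]
  have hkdvd : k ∣ orderOf ubar := by
    have h1 : k ∣ orderOf ubar * p ^ a := by
      rw [← hmul, hord]; exact Dvd.intro_left _ rfl
    exact Nat.Coprime.dvd_of_dvd_mul_right
      (Nat.Coprime.pow_right _ (Nat.coprime_comm.mp ((Nat.Prime.coprime_iff_not_dvd hp).mpr hk))) h1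
  have hkc : ordCompl[p] (orderOf ubar) = k := by
    refine Nat.dvd_antisymm ?_ ?_
    · have := Nat.ordCompl_dvd_ordCompl_of_dvd htdvd p
      rwa [hordn] at this
    · have h3 : k ∣ p ^ ((orderOf ubar).factorization p) * ordCompl[p] (orderOf ubar) := by
        rw [Nat.ordProj_mul_ordCompl_eq_self]
        exact hkdvd
      exact Nat.Coprime.dvd_of_dvd_mul_left
        (Nat.Coprime.pow_right _ (Nat.coprime_comm.mp ((Nat.Prime.coprime_iff_not_dvd hp).mpr hk))) h3
  -- the T sum vanishes via the quotient
  have hT : (∑ g : H × K, if ordCompl[p] (orderOf g) = k' then u.coeff g else 0) = 0 := by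
    have e1 : (∑ g : H × K, if ordCompl[p] (orderOf g) = k' then u.coeff g else 0)
        = ∑ y : (H × K) ⧸ M, if ordCompl[p] (orderOf y) = k' then ubar.coeff y else 0 := by
      rw [hubar]
      have h2 : (MonoidAlgebra.mapDomainRingHom ℤ (QuotientGroup.mk' M) u : MonoidAlgebra ℤ ((H × K) ⧸ M)).coeff
          = Finsupp.mapDomain (QuotientGroup.mk' M) u.coeff := rfl
      rw [h2, sum_ite_mapDomain (QuotientGroup.mk' M) u.coeff (fun y => ordCompl[p] (orderOf y) = k')]
      refine Finset.sum_congr rfl fun g _ => ?_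
      have h3 : (QuotientGroup.mk' M) g = QuotientGroup.mk (s := M) g := rfl
      rw [h3, ordCompl_quot hp M hM g]
    rw [e1, sum_group_by_order (fun y => ubar.coeff y) (fun w => ordCompl[p] w = k')]
    refine Finset.sum_eq_zero fun w _ => ?_
    by_cases hQ : ordCompl[p] w = k'
    · simp only [hQ, if_true]
      by_contra hne
      have hw := htrbar w hne
      rw [hw, hkc] at hQ
      exact hk'ne hQ.symm
    · simp [hQ]
  rw [sum_group_by_order (fun g => u.coeff g) (fun w => ordCompl[p] w = k')] at hT
  by_cases hex : ∃ g : H × K, orderOf g = j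
  · obtain ⟨g0, hg0⟩ := hex
    have hjmem : j ∈ Finset.univ.image (orderOf : H × K → ℕ) :=
      Finset.mem_image.mpr ⟨g0, Finset.mem_univ _, hg0⟩
    have hsingle := Finset.sum_eq_single_of_mem (s := Finset.univ.image (orderOf : H × K → ℕ))
      (f := fun w => if ordCompl[p] w = k' then (∑ g : H × K, if orderOf g = w then u.coeff g else 0) else 0)
      j hjmem ?_
    · rw [hsingle] at hT
      simp only [← hk'def, eq_self_iff_true, if_true] at hT
      exact hT
    · intro w hwmem hwne
      by_cases hQ : ordCompl[p] w = k'
      · simp only [hQ, if_true]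
        obtain ⟨gw, _, hgw⟩ := Finset.mem_image.mp hwmem
        have hwpos : 0 < w := hgw ▸ orderOf_pos gw
        by_cases hwd : w ∣ orderOf u
        · have hbw : w.factorization p ≤ m := by
            have h1 : p ^ w.factorization p ∣ orderOf u := (Nat.ordProj_dvd w p).trans hwd
            rw [hord] at h1
            have h2 : p ^ w.factorization p ∣ p ^ m := Nat.Coprime.dvd_of_dvd_mul_right
              (Nat.Coprime.pow_left _ ((Nat.Prime.coprime_iff_not_dvd hp).mpr hk)) h1
            exact (Nat.pow_dvd_pow_iff_le_right hp.one_lt).mp h2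
          rcases lt_or_eq_of_le hbw with hlt2 | heq2
          · exact vanish_small w hlt2
          · exfalso
            apply hwne
            rw [← Nat.ordProj_mul_ordCompl_eq_self w p, hQ, heq2]
            exact hjfact
        · exact vanish_notdvd w hwd
      · simp [hQ]
  · refine Finset.sum_eq_zero fun g _ => ?_
    have hgj : orderOf g ≠ j := fun h => hex ⟨g, h⟩
    simp [hgj]
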